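/- Let A be a Banach algebra such that A** has the T-w*w property for continuous linear maps T, S : A → A. If A** is weakly T''-S''-amenable (every T''-S''-derivation D : A** → A*** is inner), then A is weakly T-S-amenable (every T-S-derivation D : A → A* is inner). -/

import Mathlib

set_option maxHeartbeats 1000000

/-- The topological dual `E →L[𝕜] 𝕜` of a normed space, as `NormedSpace.Dual` was defined
in the older Mathlib (removed since; restored here with its old meaning). -/
abbrev NormedSpace.Dual (𝕜 : Type*) [NontriviallyNormedField 𝕜] (E : Type*)
    [SeminormedAddCommGroup E] [NormedSpace 𝕜 E] : Type _ := E →L[𝕜] 𝕜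

open Filter Topology ContinuousLinearMap NormedSpace

noncomputable section ArensSetup

/-- The adjoint (transpose) of a continuous linear map between normed spaces. -/
def adjCLM {E F : Type*} [SeminormedAddCommGroup E] [NormedSpace ℝ E]
    [SeminormedAddCommGroup F] [NormedSpace ℝ F] (T : E →L[ℝ] F) :
    Dual ℝ F →L[ℝ] Dual ℝ E :=
  (ContinuousLinearMap.compL ℝ E F ℝ).flip T

@[simp] theorem adjCLM_apply {E F : Type*} [SeminormedAddCommGroup E] [NormedSpace ℝ E]
    [SeminormedAddCommGroup F] [NormedSpace ℝ F] (T : E →L[ℝ] F) (g : Dual ℝ F) (x : E) :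
    adjCLM T g x = g (T x) := rfl

/-- One-step Arens-type adjoint of a bounded bilinear map:
`ext1 β g' e = g' ∘ (β e)`. -/
def ext1 {E F G : Type*} [SeminormedAddCommGroup E] [NormedSpace ℝ E]
    [SeminormedAddCommGroup F] [NormedSpace ℝ F] [SeminormedAddCommGroup G] [NormedSpace ℝ G]
    (β : E →L[ℝ] F →L[ℝ] G) : Dual ℝ G →L[ℝ] E →L[ℝ] Dual ℝ F :=
  ((ContinuousLinearMap.compL ℝ F G ℝ).flip.comp β).flip

@[simp] theorem ext1_apply {E F G : Type*} [SeminormedAddCommGroup E] [NormedSpace ℝ E]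
    [SeminormedAddCommGroup F] [NormedSpace ℝ F] [SeminormedAddCommGroup G] [NormedSpace ℝ G]
    (β : E →L[ℝ] F →L[ℝ] G) (g' : Dual ℝ G) (e : E) (f : F) :
    ext1 β g' e f = g' (β e f) := rfl

/-- Triple adjoint: the (first) Arens extension of a bounded bilinear map to the
second duals. -/
def ext3 {E F G : Type*} [SeminormedAddCommGroup E] [NormedSpace ℝ E]
    [SeminormedAddCommGroup F] [NormedSpace ℝ F] [SeminormedAddCommGroup G] [NormedSpace ℝ G]
    (β : E →L[ℝ] F →L[ℝ] G) :
    Dual ℝ (Dual ℝ E) →L[ℝ] Dual ℝ (Dual ℝ F) →L[ℝ] Dual ℝ (Dual ℝ G) :=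
  ext1 (ext1 (ext1 β))

variable (A : Type*) [NonUnitalNormedRing A] [NormedSpace ℝ A]
  [SMulCommClass ℝ A A] [IsScalarTower ℝ A A] [CompleteSpace A]

/-- The first (left) Arens product on `A**`: `⟨a''b'', a'⟩ = ⟨a'', b''a'⟩`. -/
def fArens : Dual ℝ (Dual ℝ A) →L[ℝ] Dual ℝ (Dual ℝ A) →L[ℝ] Dual ℝ (Dual ℝ A) :=
  ext3 (ContinuousLinearMap.mul ℝ A)

/-- The second (right) Arens product on `A**`: `⟨a''∘b'', a'⟩ = ⟨b'', a'∘a''⟩`. -/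
def sArens : Dual ℝ (Dual ℝ A) →L[ℝ] Dual ℝ (Dual ℝ A) →L[ℝ] Dual ℝ (Dual ℝ A) :=
  (ext3 (ContinuousLinearMap.mul ℝ A).flip).flip

/-- `A` is Arens regular when the two Arens products on `A**` coincide. -/
def ArensRegular : Prop := fArens A = sArens A

variable {A}

/-- Weak-star to weak continuity for a map from the dual of `E` into `F`. -/
def WStarToWCont {E F : Type*} [SeminormedAddCommGroup E] [NormedSpace ℝ E]
    [SeminormedAddCommGroup F] [NormedSpace ℝ F] (f : Dual ℝ E → F) : Prop :=
  Continuous fun x : WeakDual ℝ E => toWeakSpace ℝ F (f (WeakDual.toStrongDual x))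

variable (A)

/-- The second adjoint `T'' : A** → A**` of `T : A → A`. -/
def secondAdj (T : A →L[ℝ] A) : Dual ℝ (Dual ℝ A) →L[ℝ] Dual ℝ (Dual ℝ A) :=
  adjCLM (adjCLM T)

/-- Left action of `A` on `A*`: `⟨a·a', b⟩ = ⟨a', ba⟩`. -/
def dualLeft : A →L[ℝ] Dual ℝ A →L[ℝ] Dual ℝ A :=
  (ext1 (ContinuousLinearMap.mul ℝ A).flip).flip

/-- Right action of `A` on `A*`: `⟨a'·a, b⟩ = ⟨a', ab⟩`. -/
def dualRight : Dual ℝ A →L[ℝ] A →L[ℝ] Dual ℝ A :=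
  ext1 (ContinuousLinearMap.mul ℝ A)

/-- Left action of `A**` (first Arens product) on `A***`. -/
def dualLeft2 : Dual ℝ (Dual ℝ A) →L[ℝ] Dual ℝ (Dual ℝ (Dual ℝ A)) →L[ℝ]
    Dual ℝ (Dual ℝ (Dual ℝ A)) :=
  (ext1 (fArens A).flip).flip

/-- Right action of `A**` (first Arens product) on `A***`. -/
def dualRight2 : Dual ℝ (Dual ℝ (Dual ℝ A)) →L[ℝ] Dual ℝ (Dual ℝ A) →L[ℝ]
    Dual ℝ (Dual ℝ (Dual ℝ A)) :=
  ext1 (fArens A)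

end ArensSetup

section BimoduleSetup

set_option maxHeartbeats 1000000

open Filter Topology ContinuousLinearMap NormedSpace

/-- A Banach `A`-bimodule: bounded bilinear left and right actions satisfying the
usual compatibility axioms. -/
structure BanachBimodule (A X : Type*) [NonUnitalNormedRing A] [NormedSpace ℝ A]
    [SMulCommClass ℝ A A] [IsScalarTower ℝ A A]
    [NormedAddCommGroup X] [NormedSpace ℝ X] [CompleteSpace X] where
  l : A →L[ℝ] X →L[ℝ] X
  r : X →L[ℝ] A →L[ℝ] X
  l_mul : ∀ a b x, l (a * b) x = l a (l b x)
  r_mul : ∀ x a b, r (r x a) b = r x (a * b)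
  l_r : ∀ a x b, l a (r x b) = r (l a x) b

variable {A X : Type*} [NonUnitalNormedRing A] [NormedSpace ℝ A]
  [SMulCommClass ℝ A A] [IsScalarTower ℝ A A] [CompleteSpace A]
  [NormedAddCommGroup X] [NormedSpace ℝ X] [CompleteSpace X]

/-- Left action of `A` on `X*`: `⟨a·f, x⟩ = ⟨f, x·a⟩`. -/
noncomputable def modDualLeft (M : BanachBimodule A X) : A →L[ℝ] Dual ℝ X →L[ℝ] Dual ℝ X :=
  (ext1 M.r.flip).flip

/-- Right action of `A` on `X*`: `⟨f·a, x⟩ = ⟨f, a·x⟩`. -/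
noncomputable def modDualRight (M : BanachBimodule A X) : Dual ℝ X →L[ℝ] A →L[ℝ] Dual ℝ X :=
  ext1 M.l

/-- Left action of `A**` on `X**` (first Arens extension). -/
noncomputable def modL2 (M : BanachBimodule A X) :
    Dual ℝ (Dual ℝ A) →L[ℝ] Dual ℝ (Dual ℝ X) →L[ℝ] Dual ℝ (Dual ℝ X) :=
  ext3 M.l

/-- Right action of `A**` on `X**` (first Arens extension); `modR2 M x'' a'' = x''a''`. -/
noncomputable def modR2 (M : BanachBimodule A X) :
    Dual ℝ (Dual ℝ X) →L[ℝ] Dual ℝ (Dual ℝ A) →L[ℝ] Dual ℝ (Dual ℝ X) :=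
  ext3 M.r

/-- Left action of `A**` on `X***`: `⟨a''·x''', x''⟩ = ⟨x''', x''a''⟩`. -/
noncomputable def modL3 (M : BanachBimodule A X) :
    Dual ℝ (Dual ℝ A) →L[ℝ] Dual ℝ (Dual ℝ (Dual ℝ X)) →L[ℝ] Dual ℝ (Dual ℝ (Dual ℝ X)) :=
  (ext1 (modR2 M).flip).flip

/-- Right action of `A**` on `X***`: `⟨x'''·a'', x''⟩ = ⟨x''', a''x''⟩`. -/
noncomputable def modR3 (M : BanachBimodule A X) :
    Dual ℝ (Dual ℝ (Dual ℝ X)) →L[ℝ] Dual ℝ (Dual ℝ A) →L[ℝ] Dual ℝ (Dual ℝ (Dual ℝ X)) :=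
  ext1 (modL2 M)

end BimoduleSetup

section DerivationSetup

variable {B Y : Type*} [SeminormedAddCommGroup B] [NormedSpace ℝ B]
  [SeminormedAddCommGroup Y] [NormedSpace ℝ Y]

/-- `D` is a derivation with respect to the multiplication `m` and the module
actions `l`, `r`. -/
def IsDeriv (m : B →L[ℝ] B →L[ℝ] B) (l : B →L[ℝ] Y →L[ℝ] Y)
    (r : Y →L[ℝ] B →L[ℝ] Y) (D : B →L[ℝ] Y) : Prop :=
  ∀ a b, D (m a b) = l a (D b) + r (D a) b

/-- `D` is an inner derivation: `D a = a·y − y·a` for some fixed `y`. -/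
def IsInner (l : B →L[ℝ] Y →L[ℝ] Y) (r : Y →L[ℝ] B →L[ℝ] Y) (D : B →L[ℝ] Y) : Prop :=
  ∃ y, ∀ a, D a = l a y - r y a

/-- `D` is a `T-S`-derivation: `D(ab) = T(a)·D(b) + D(a)·S(b)`. -/
def IsTSDeriv (m : B →L[ℝ] B →L[ℝ] B) (l : B →L[ℝ] Y →L[ℝ] Y)
    (r : Y →L[ℝ] B →L[ℝ] Y) (T S : B →L[ℝ] B) (D : B →L[ℝ] Y) : Prop :=
  ∀ a b, D (m a b) = l (T a) (D b) + r (D a) (S b)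

/-- `D` is an inner `T-S`-derivation: `D a = T(a)·y − y·S(a)` for some fixed `y`. -/
def IsTSInner (l : B →L[ℝ] Y →L[ℝ] Y) (r : Y →L[ℝ] B →L[ℝ] Y)
    (T S : B →L[ℝ] B) (D : B →L[ℝ] Y) : Prop :=
  ∃ y, ∀ a, D a = l (T a) y - r y (S a)

end DerivationSetup



section AuxDensity
open Filter Topology ContinuousLinearMap NormedSpace

/-- Every continuous linear functional on the weak-star dual is an evaluation. -/
theorem weakDual_exists_eval {V : Type*} [NormedAddCommGroup V] [NormedSpace ℝ V]
    (f : WeakDual ℝ V →L[ℝ] ℝ) :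
    ∃ v : V, ∀ φ : Dual ℝ V, f φ = φ v := by
  classical
  set p : SeminormFamily ℝ (WeakDual ℝ V) V := (topDualPairing ℝ V).toSeminormFamily with hp
  have hws : WithSeminorms p := (topDualPairing ℝ V).weakBilin_withSeminorms
  set q : Seminorm ℝ (WeakDual ℝ V) := (normSeminorm ℝ ℝ).comp (f : WeakDual ℝ V →ₗ[ℝ] ℝ) with hq
  have hqc : Continuous q := by
    have : Continuous fun x : WeakDual ℝ V => ‖f x‖ := f.continuous.norm
    exact this
  obtain ⟨s, C, hC, hle⟩ := Seminorm.bound_of_continuous hws q hqc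
  set L : {y // y ∈ s} → WeakDual ℝ V →ₗ[ℝ] ℝ := fun y => (topDualPairing ℝ V).flip y.1 with hL
  have hker : (⨅ i, LinearMap.ker (L i)) ≤ LinearMap.ker (f : WeakDual ℝ V →ₗ[ℝ] ℝ) := by
    intro φ hφ
    simp only [Submodule.mem_iInf, LinearMap.mem_ker] at hφ ⊢
    have hsup : (s.sup p) φ ≤ 0 := by
      refine Seminorm.finset_sup_apply_le le_rfl fun i hi => ?_
      have := hφ ⟨i, hi⟩
      simp [p, LinearMap.toSeminormFamily, L] at this ⊢
      exact (show ‖((topDualPairing ℝ V).flip i) φ‖ ≤ 0 from le_of_eq ((congrArg norm this).trans norm_zero))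
    have : q φ ≤ 0 := by
      have h1 : q φ ≤ (C : ℝ) * (s.sup p) φ := hle φ
      have h3 : (C : ℝ) * (s.sup p) φ ≤ 0 := mul_nonpos_of_nonneg_of_nonpos C.2 hsup
      linarith
    have hq0 : ‖f φ‖ ≤ 0 := this
    simpa using le_antisymm hq0 (norm_nonneg _)
  have hmem := mem_span_of_iInf_ker_le_ker hker
  obtain ⟨c, hc⟩ := (Submodule.mem_span_range_iff_exists_fun ℝ).1 hmem
  refine ⟨∑ i, c i • (i : V), fun φ => ?_⟩
  have h1 := congrArg (fun g : WeakDual ℝ V →ₗ[ℝ] ℝ => g φ) hc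
  simp only [LinearMap.coe_sum, Finset.sum_apply, LinearMap.smul_apply] at h1
  have h2 : f φ = ∑ x : { y // y ∈ s }, c x • (L x) φ := h1.symm.trans (Finset.sum_apply _ _ _)
  rw [h2, map_sum]
  refine Finset.sum_congr rfl fun i _ => ?_
  rw [map_smul]
  rfl

/-- Goldstine-type density: the canonical image of `E` is weak-star dense in the bidual. -/
theorem denseRange_inclusionInDoubleDual (E : Type*) [NormedAddCommGroup E] [NormedSpace ℝ E] :
    DenseRange (fun x : E => StrongDual.toWeakDual (inclusionInDoubleDual ℝ E x)) := by
  classical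
  haveI : LocallyConvexSpace ℝ (WeakDual ℝ (Dual ℝ E)) := WeakBilin.locallyConvexSpace
  let j : E →ₗ[ℝ] WeakDual ℝ (Dual ℝ E) :=
    ((inclusionInDoubleDual ℝ E).toLinearMap : E →ₗ[ℝ] Dual ℝ (Dual ℝ E))
  have hrange : Set.range (fun x : E => StrongDual.toWeakDual (inclusionInDoubleDual ℝ E x))
      = (LinearMap.range j : Set (WeakDual ℝ (Dual ℝ E))) := by
    ext z
    constructor
    · rintro ⟨a, rfl⟩; exact ⟨a, rfl⟩
    · rintro ⟨a, rfl⟩; exact ⟨a, rfl⟩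
  have key : ∀ x : WeakDual ℝ (Dual ℝ E), x ∈ (LinearMap.range j).topologicalClosure := by
    intro x
    by_contra hx
    obtain ⟨f, u, hb, hu⟩ := geometric_hahn_banach_closed_point
      ((LinearMap.range j).topologicalClosure.convex)
      ((LinearMap.range j).isClosed_topologicalClosure) hx
    have hzero : ∀ y ∈ (LinearMap.range j).topologicalClosure, f y = 0 := by
      intro y hy
      by_contra hfy
      have h1 : f ((u / f y + 1 / f y) • y) < u :=
        hb _ ((LinearMap.range j).topologicalClosure.smul_mem _ hy)
      rw [map_smul] at h1
      simp only [smul_eq_mul] at h1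
      rw [add_mul, div_mul_cancel₀ _ hfy, div_mul_cancel₀ _ hfy] at h1
      linarith
    obtain ⟨v, hv⟩ := weakDual_exists_eval f
    have hv0 : v = 0 := by
      ext a
      have : f (j a) = 0 := hzero _
        (Submodule.le_topologicalClosure _ (LinearMap.mem_range_self j a))
      exact (hv (j a)).symm.trans this
    have hfx : f x = 0 := (hv x).trans (by rw [hv0]; exact map_zero (x : Dual ℝ (Dual ℝ E)))
    have := hb 0 ((LinearMap.range j).topologicalClosure.zero_mem)
    rw [map_zero] at this
    linarith
  rw [DenseRange, hrange, dense_iff_closure_eq]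
  exact Set.eq_univ_of_forall fun x =>
    (Submodule.topologicalClosure_coe (LinearMap.range j)).subset (SetLike.mem_coe.2 (key x))

end AuxDensity

section Statements
set_option maxHeartbeats 1000000
open Filter Topology ContinuousLinearMap NormedSpace

variable {A : Type*} [NonUnitalNormedRing A] [NormedSpace ℝ A]
  [SMulCommClass ℝ A A] [IsScalarTower ℝ A A] [CompleteSpace A]

/-- If `A**` has the `T-w*w` property and `A**` is weakly `T''-S''`-amenable, then `A` is
weakly `T-S`-amenable. -/
theorem weaklyTSamenable_of_bidual (T S : A →L[ℝ] A)
    (hT : ∀ a'' : Dual ℝ (Dual ℝ A), WStarToWCont (fun b'' => fArens A a'' (secondAdj A T b'')))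
    (hAm : ∀ G : Dual ℝ (Dual ℝ A) →L[ℝ] Dual ℝ (Dual ℝ (Dual ℝ A)),
      IsTSDeriv (fArens A) (dualLeft2 A) (dualRight2 A)
        (secondAdj A T) (secondAdj A S) G →
      IsTSInner (dualLeft2 A) (dualRight2 A) (secondAdj A T) (secondAdj A S) G) :
    ∀ D : A →L[ℝ] Dual ℝ A,
      IsTSDeriv (ContinuousLinearMap.mul ℝ A) (dualLeft A) (dualRight A) T S D →
      IsTSInner (dualLeft A) (dualRight A) T S D := by
  intro D hD
  have step1 : ∀ (a : A) (b'' x'' : Dual ℝ (Dual ℝ A)),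
      adjCLM (adjCLM D) (fArens A (inclusionInDoubleDual ℝ A a) b'') x''
        = dualLeft2 A (secondAdj A T (inclusionInDoubleDual ℝ A a)) (adjCLM (adjCLM D) b'') x''
          + dualRight2 A (adjCLM (adjCLM D) (inclusionInDoubleDual ℝ A a))
              (secondAdj A S b'') x'' := by
    intro a b'' x''
    have hL : adjCLM (adjCLM D) (fArens A (inclusionInDoubleDual ℝ A a) b'') x''
        = b'' (dualRight A (adjCLM D x'') a) := rfl
    have hR1 : dualLeft2 A (secondAdj A T (inclusionInDoubleDual ℝ A a))
          (adjCLM (adjCLM D) b'') x''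
        = b'' (adjCLM D (fArens A x'' (secondAdj A T (inclusionInDoubleDual ℝ A a)))) := rfl
    have hR2 : dualRight2 A (adjCLM (adjCLM D) (inclusionInDoubleDual ℝ A a))
          (secondAdj A S b'') x''
        = b'' (adjCLM S (ext1 (ext1 (ContinuousLinearMap.mul ℝ A)) x'' (D a))) := rfl
    have huvw : dualRight A (adjCLM D x'') a
        = adjCLM D (fArens A x'' (secondAdj A T (inclusionInDoubleDual ℝ A a)))
          + adjCLM S (ext1 (ext1 (ContinuousLinearMap.mul ℝ A)) x'' (D a)) := by
      ext b
      rw [ContinuousLinearMap.add_apply]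
      have e1 : dualRight A (adjCLM D x'') a b
          = x'' (D (ContinuousLinearMap.mul ℝ A a b)) := rfl
      have e2 : adjCLM D (fArens A x'' (secondAdj A T (inclusionInDoubleDual ℝ A a))) b
          = x'' (dualLeft A (T a) (D b)) := rfl
      have e3 : adjCLM S (ext1 (ext1 (ContinuousLinearMap.mul ℝ A)) x'' (D a)) b
          = x'' (dualRight A (D a) (S b)) := rfl
      rw [e1, e2, e3, hD a b, map_add]
    rw [hL, hR1, hR2, ← map_add, huvw]
  have hG : IsTSDeriv (fArens A) (dualLeft2 A) (dualRight2 A)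
      (secondAdj A T) (secondAdj A S) (adjCLM (adjCLM D)) := by
    intro a'' b''
    ext x''
    rw [ContinuousLinearMap.add_apply]
    have h₁ : Continuous (fun z : WeakDual ℝ (Dual ℝ A) =>
        adjCLM (adjCLM D) (fArens A (WeakDual.toStrongDual z) b'') x'') := by
      have hrfl : (fun z : WeakDual ℝ (Dual ℝ A) =>
            adjCLM (adjCLM D) (fArens A (WeakDual.toStrongDual z) b'') x'')
          = fun z : WeakDual ℝ (Dual ℝ A) =>
              z (ext1 (ext1 (ContinuousLinearMap.mul ℝ A)) b'' (adjCLM D x'')) := rfl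
      rw [hrfl]
      exact WeakDual.eval_continuous _
    have h₂ : Continuous (fun z : WeakDual ℝ (Dual ℝ A) =>
        dualLeft2 A (secondAdj A T (WeakDual.toStrongDual z)) (adjCLM (adjCLM D) b'') x''
          + dualRight2 A (adjCLM (adjCLM D) (WeakDual.toStrongDual z))
              (secondAdj A S b'') x'') := by
      apply Continuous.add
      · exact (WeakBilin.eval_continuous ((topDualPairing ℝ (Dual ℝ (Dual ℝ A))).flip)
          (adjCLM (adjCLM D) b'')).comp (hT x'')
      · have hrfl : (fun z : WeakDual ℝ (Dual ℝ A) =>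
              dualRight2 A (adjCLM (adjCLM D) (WeakDual.toStrongDual z))
                (secondAdj A S b'') x'')
            = fun z : WeakDual ℝ (Dual ℝ A) =>
                z (adjCLM D (fArens A (secondAdj A S b'') x'')) := rfl
        rw [hrfl]
        exact WeakDual.eval_continuous _
    have hEq : Set.EqOn
        (fun z : WeakDual ℝ (Dual ℝ A) =>
          adjCLM (adjCLM D) (fArens A (WeakDual.toStrongDual z) b'') x'')
        (fun z : WeakDual ℝ (Dual ℝ A) =>
          dualLeft2 A (secondAdj A T (WeakDual.toStrongDual z)) (adjCLM (adjCLM D) b'') x''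
            + dualRight2 A (adjCLM (adjCLM D) (WeakDual.toStrongDual z))
                (secondAdj A S b'') x'')
        (Set.range fun x : A => StrongDual.toWeakDual (inclusionInDoubleDual ℝ A x)) := by
      rintro _ ⟨a, rfl⟩
      exact step1 a b'' x''
    have hfun := Continuous.ext_on (denseRange_inclusionInDoubleDual A) h₁ h₂ hEq
    exact congrFun hfun (StrongDual.toWeakDual a'')
  obtain ⟨y''', hy⟩ := hAm (adjCLM (adjCLM D)) hG
  refine ⟨adjCLM (inclusionInDoubleDual ℝ A) y''', fun a => ?_⟩
  ext b
  have h1 : D a b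
      = adjCLM (adjCLM D) (inclusionInDoubleDual ℝ A a) (inclusionInDoubleDual ℝ A b) := rfl
  rw [h1, hy (inclusionInDoubleDual ℝ A a), ContinuousLinearMap.sub_apply,
    ContinuousLinearMap.sub_apply]
  have hA1 : fArens A (inclusionInDoubleDual ℝ A b)
        (secondAdj A T (inclusionInDoubleDual ℝ A a))
      = inclusionInDoubleDual ℝ A (b * T a) := by ext a'; rfl
  have hA2 : fArens A (secondAdj A S (inclusionInDoubleDual ℝ A a))
        (inclusionInDoubleDual ℝ A b)
      = inclusionInDoubleDual ℝ A (S a * b) := by ext a'; rfl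
  have hl : dualLeft2 A (secondAdj A T (inclusionInDoubleDual ℝ A a)) y'''
        (inclusionInDoubleDual ℝ A b)
      = dualLeft A (T a) (adjCLM (inclusionInDoubleDual ℝ A) y''') b := by
    calc dualLeft2 A (secondAdj A T (inclusionInDoubleDual ℝ A a)) y'''
          (inclusionInDoubleDual ℝ A b)
        = y''' (fArens A (inclusionInDoubleDual ℝ A b)
            (secondAdj A T (inclusionInDoubleDual ℝ A a))) := rfl
      _ = y''' (inclusionInDoubleDual ℝ A (b * T a)) := by rw [hA1]
      _ = dualLeft A (T a) (adjCLM (inclusionInDoubleDual ℝ A) y''') b := rfl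
  have hr : dualRight2 A y''' (secondAdj A S (inclusionInDoubleDual ℝ A a))
        (inclusionInDoubleDual ℝ A b)
      = dualRight A (adjCLM (inclusionInDoubleDual ℝ A) y''') (S a) b := by
    calc dualRight2 A y''' (secondAdj A S (inclusionInDoubleDual ℝ A a))
          (inclusionInDoubleDual ℝ A b)
        = y''' (fArens A (secondAdj A S (inclusionInDoubleDual ℝ A a))
            (inclusionInDoubleDual ℝ A b)) := rfl
      _ = y''' (inclusionInDoubleDual ℝ A (S a * b)) := by rw [hA2]
      _ = dualRight A (adjCLM (inclusionInDoubleDual ℝ A) y''') (S a) b := rfl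
  rw [hl, hr]


end Statements
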